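/- arXiv:2408.00186 — 2 statements merged into one kernel-verified Lean document; each statement's English description precedes it below -/
import Mathlib

section
/- For positive integers n, ∑_{k=0}^{n} q^{(k-n)²} · C_q(n, k)² · C_q(3n+k, 2n) = C_q(3n, n)², where C_q denotes the Gaussian binomial coefficient. -/
open Finset

/-- The q-Pochhammer symbol `(a;q)_n = ∏_{j=0}^{n-1} (1 - a q^j)`. -/
noncomputable def qPoch (q a : RatFunc ℚ) (n : ℕ) : RatFunc ℚ :=
  ∏ j ∈ Finset.range n, (1 - a * q ^ j)

/-- The Gaussian (q-binomial) coefficient `C_q(m, k)`, defined as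
`(q;q)_m / ((q;q)_k (q;q)_{m-k})` for `0 ≤ k ≤ m`, and `0` otherwise. -/
noncomputable def qBinom (q : RatFunc ℚ) (m k : ℤ) : RatFunc ℚ :=
  if 0 ≤ k ∧ k ≤ m then
    qPoch q q m.toNat / (qPoch q q k.toNat * qPoch q q (m - k).toNat)
  else 0

local notation "q" => (RatFunc.X : RatFunc ℚ)

lemma X_pow_ne_one {m : ℕ} (hm : 0 < m) : q ^ m ≠ 1 := by
  intro h
  have : (Polynomial.X : Polynomial ℚ) ^ m = 1 := by
    apply_fun (algebraMap (Polynomial ℚ) (RatFunc ℚ))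
    · simpa [RatFunc.algebraMap_X] using h
    · exact RatFunc.algebraMap_injective ℚ
  have := congrArg Polynomial.natDegree this
  simp [Polynomial.natDegree_X_pow] at this
  omega

lemma one_sub_X_pow_ne_zero {m : ℕ} (hm : 0 < m) : (1 : RatFunc ℚ) - q ^ m ≠ 0 := by
  intro h
  exact X_pow_ne_one hm (by linear_combination -h)

lemma qPoch_ne_zero (n : ℕ) : qPoch q q n ≠ 0 := by
  rw [qPoch]
  apply Finset.prod_ne_zero_iff.2
  intro j _
  have := one_sub_X_pow_ne_zero (m := j+1) (Nat.succ_pos j)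
  rw [pow_succ'] at this
  simpa using this

lemma qPoch_succ (n : ℕ) : qPoch q q (n+1) = qPoch q q n * (1 - q ^ (n+1)) := by
  rw [qPoch, qPoch, Finset.prod_range_succ, ← pow_succ']

/-- Natural-number-indexed Gaussian binomial. -/
noncomputable def Bn (m k : ℕ) : RatFunc ℚ := qBinom q (m : ℤ) (k : ℤ)

local notation "P" => qPoch q q

lemma Bn_eq {m k : ℕ} (h : k ≤ m) : Bn m k = P m / (P k * P (m - k)) := by
  rw [Bn, qBinom, if_pos ⟨Int.natCast_nonneg k, by exact_mod_cast h⟩]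
  have h1 : ((m:ℤ)).toNat = m := Int.toNat_natCast m
  have h2 : ((k:ℤ)).toNat = k := Int.toNat_natCast k
  have h3 : ((m:ℤ) - (k:ℤ)).toNat = m - k := by omega
  rw [h1, h2, h3]

lemma Bn_eq_zero {m k : ℕ} (h : m < k) : Bn m k = 0 := by
  rw [Bn, qBinom, if_neg]
  rintro ⟨-, h2⟩
  exact absurd (by exact_mod_cast h2) (not_le.2 h)

lemma Bn_ne_zero {m k : ℕ} (h : k ≤ m) : Bn m k ≠ 0 := by
  rw [Bn_eq h]
  exact div_ne_zero (qPoch_ne_zero m) (mul_ne_zero (qPoch_ne_zero k) (qPoch_ne_zero _))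

lemma Bn_self (m : ℕ) : Bn m m = 1 := by
  rw [Bn_eq le_rfl, Nat.sub_self]
  have h0 : P 0 = 1 := by simp [qPoch]
  rw [h0, mul_one, div_self (qPoch_ne_zero m)]

lemma Bn_zero (m : ℕ) : Bn m 0 = 1 := by
  rw [Bn_eq (Nat.zero_le m), Nat.sub_zero]
  have h0 : P 0 = 1 := by simp [qPoch]
  rw [h0, one_mul, div_self (qPoch_ne_zero m)]

lemma Bn_symm {m k : ℕ} (h : k ≤ m) : Bn m k = Bn m (m - k) := by
  rw [Bn_eq h, Bn_eq (Nat.sub_le m k)]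
  rw [Nat.sub_sub_self h, mul_comm]

/-- First Pascal-type multiplicative relation. -/
lemma Bn_succ_top (m k : ℕ) :
    Bn (m+1) k * (1 - q ^ (m+1-k)) = Bn m k * (1 - q ^ (m+1)) := by
  rcases le_or_gt k m with h | h
  · rw [Bn_eq (h.trans (Nat.le_succ m)), Bn_eq h, qPoch_succ]
    have h2 : m + 1 - k = (m - k) + 1 := by omega
    rw [h2, qPoch_succ]
    have e1 := qPoch_ne_zero k
    have e2 := qPoch_ne_zero (m - k)
    have e3 : (1 : RatFunc ℚ) - q ^ (m - k + 1) ≠ 0 := one_sub_X_pow_ne_zero (by omega)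
    field_simp
  · rcases Nat.eq_or_lt_of_le h with h' | h'
    · subst h'
      rw [Bn_eq le_rfl]
      simp [Bn_eq_zero h]
    · rw [Bn_eq_zero h', Bn_eq_zero h]
      simp

/-- Second Pascal-type multiplicative relation. -/
lemma Bn_succ_bot (m k : ℕ) :
    Bn m (k+1) * (1 - q ^ (k+1)) = Bn m k * (1 - q ^ (m-k)) := by
  rcases lt_or_ge k m with h | h
  · rw [Bn_eq h, Bn_eq h.le, qPoch_succ]
    have h2 : m - k = (m - (k+1)) + 1 := by omega
    rw [h2, qPoch_succ]
    have e1 := qPoch_ne_zero k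
    have e2 := qPoch_ne_zero (m - (k+1))
    have e3 : (1 : RatFunc ℚ) - q ^ (k + 1) ≠ 0 := one_sub_X_pow_ne_zero (by omega)
    have e4 : (1 : RatFunc ℚ) - q ^ (m - (k+1) + 1) ≠ 0 := one_sub_X_pow_ne_zero (by omega)
    field_simp
  · rcases Nat.eq_or_lt_of_le h with h' | h'
    · subst h'
      rw [Bn_eq_zero (by omega)]
      simp
    · rw [Bn_eq_zero h', Bn_eq_zero (by omega)]
      simp

/-- The core four-variable rational-function identity behind q-Pfaff–Saalschütz. -/
lemma core_id (a b c t Q BL BS Bx By Bxs Bys PJ : RatFunc ℚ)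
    (ht : t ≠ 0) (hQ : Q ≠ 0) (hu : 1 - t*Q ≠ 0) (hw : 1 - a*b*c*(t*t) ≠ 0)
    (r1 : Bxs * (1 - t*Q) = Bx * (1 - a))
    (r2 : Bys * (1 - t*Q) = By * (1 - b))
    (r3 : BL * (1 - c) = BS * (1 - a*b*c*(t*t))) :
    (1 - c*t)^2 * (PJ * Bx * By * BL)
      - (1 - b*c*(t*t))*(1 - a*c*(t*t)) * (PJ * Bx * By * BS)
    = -(c*t * (1 - t*Q)^2 * (PJ*(t*t)*Q) * Bxs * Bys * BS) / (t*Q)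
      - (-(c*t * (1 - t)^2 * PJ * Bx * By * BL) / t) := by
  have e1 : -(c*t * (1 - t*Q)^2 * (PJ*(t*t)*Q) * Bxs * Bys * BS) / (t*Q)
      = -(c * (1 - t*Q)^2 * (PJ*(t*t)) * Bxs * Bys * BS) := by
    rw [div_eq_iff (mul_ne_zero ht hQ)]; ring
  have e2 : -(c*t * (1 - t)^2 * PJ * Bx * By * BL) / t
      = -(c * (1 - t)^2 * PJ * Bx * By * BL) := by
    rw [div_eq_iff ht]; ring
  rw [e1, e2]
  have h123 : (Bxs * (1 - t*Q)) * (Bys * (1 - t*Q)) * (BS * (1 - a*b*c*(t*t)))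
      = (Bx * (1 - a)) * (By * (1 - b)) * (BL * (1 - c)) := by
    rw [r1, r2, ← r3]
  apply mul_left_cancel₀ hw
  linear_combination (c*PJ*(t*t)) * h123
    + ((1 - b*c*(t*t))*(1 - a*c*(t*t))*PJ*Bx*By) * r3

/-- The summand of the Saalschütz sum. -/
noncomputable def Tt (x y z j : ℕ) : RatFunc ℚ :=
  q^(j*j) * Bn x j * Bn y j * Bn (z - j) (x + y)

/-- The telescoping certificate. -/
noncomputable def Gg (x y d j : ℕ) : RatFunc ℚ :=
  -(q^(d+1) * (1 - q^j)^2 * q^(j*j) * Bn x j * Bn y j * Bn (x+y+d+1-j) (x+y)) / q^j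

lemma X_pow_eq (m k l : ℕ) (h : m = k + l) : q^m = q^k * q^l := by
  rw [h, pow_add]

/-- The per-term certificate identity (q-Zeilberger certificate for q-Saalschütz). -/
lemma cert (x y d j : ℕ) :
    (1 - q^(d+1))^2 * Tt x y (x+y+d+1) j
      - (1 - q^(y+d+1)) * (1 - q^(x+d+1)) * Tt x y (x+y+d) j
    = Gg x y d (j+1) - Gg x y d j := by
  rcases lt_or_ge x j with hx | hx
  · have z1 : Bn x j = 0 := Bn_eq_zero hx
    have z2 : Bn x (j+1) = 0 := Bn_eq_zero (by omega)
    simp [Tt, Gg, z1, z2]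
  rcases lt_or_ge y j with hy | hy
  · have z1 : Bn y j = 0 := Bn_eq_zero hy
    have z2 : Bn y (j+1) = 0 := Bn_eq_zero (by omega)
    simp [Tt, Gg, z1, z2]
  rcases lt_or_ge d j with hd | hd
  · -- out-of-range in the z direction
    have hx0 : 0 < x := by omega
    have z2 : Bn (x+y+d-j) (x+y) = 0 := Bn_eq_zero (by omega)
    have z2' : Bn (x+y+d+1-(j+1)) (x+y) = 0 := by
      rw [show x+y+d+1-(j+1) = x+y+d-j by omega]; exact z2
    rcases lt_or_ge (d+1) j with hd2 | hd2
    · have z1 : Bn (x+y+d+1-j) (x+y) = 0 := Bn_eq_zero (by omega)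
      simp [Tt, Gg, z1, z2, z2']
    · have hj : j = d + 1 := by omega
      subst hj
      rw [Tt, Tt, Gg, Gg, z2, z2']
      have htQ : (q : RatFunc ℚ)^(d+1) ≠ 0 := pow_ne_zero _ RatFunc.X_ne_zero
      field_simp
      ring
  · -- main case : j ≤ x, j ≤ y, j ≤ d
    rw [Tt, Tt, Gg, Gg]
    rw [show x+y+d+1-(j+1) = x+y+d-j by omega]
    have r1 := Bn_succ_bot x j
    have r2 := Bn_succ_bot y j
    have r3 := Bn_succ_top (x+y+d-j) (x+y)
    rw [show x+y+d-j+1 = x+y+d+1-j by omega] at r3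
    rw [show x+y+d+1-j-(x+y) = d+1-j by omega] at r3
    rw [X_pow_eq (d+1) (d+1-j) j (by omega),
        X_pow_eq (y+d+1) (y-j) ((d+1-j)+(j+j)) (by omega),
        X_pow_eq ((d+1-j)+(j+j)) (d+1-j) (j+j) rfl,
        X_pow_eq (j+j) j j rfl,
        X_pow_eq (x+d+1) (x-j) ((d+1-j)+(j+j)) (by omega),
        X_pow_eq ((j+1)*(j+1)) (j*j) (j+(j+1)) (by ring),
        X_pow_eq (j+(j+1)) j (j+1) rfl,
        X_pow_eq (j+1) j 1 rfl,
        X_pow_eq (x-j) (x-j) 0 (by omega)]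
    have ht : (q:RatFunc ℚ)^j ≠ 0 := pow_ne_zero _ RatFunc.X_ne_zero
    have hQ : (q:RatFunc ℚ)^1 ≠ 0 := pow_ne_zero _ RatFunc.X_ne_zero
    have hu : (1:RatFunc ℚ) - q^j * q^1 ≠ 0 := by
      have := one_sub_X_pow_ne_zero (m := j+1) (by omega)
      rwa [X_pow_eq (j+1) j 1 rfl] at this
    have hw : (1:RatFunc ℚ) - q^(x-j)*q^(y-j)*q^(d+1-j)*(q^j*q^j) ≠ 0 := by
      have := one_sub_X_pow_ne_zero (m := x+y+d+1-j) (by omega)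
      rwa [X_pow_eq (x+y+d+1-j) (x-j) ((y-j)+((d+1-j)+(j+j))) (by omega),
           X_pow_eq ((y-j)+((d+1-j)+(j+j))) (y-j) ((d+1-j)+(j+j)) rfl,
           X_pow_eq ((d+1-j)+(j+j)) (d+1-j) (j+j) rfl,
           X_pow_eq (j+j) j j rfl, show q^(x-j)*(q^(y-j)*(q^(d+1-j)*(q^j*q^j)))
             = q^(x-j)*q^(y-j)*q^(d+1-j)*(q^j*q^j) by ring] at this
    rw [X_pow_eq (j+1) j 1 rfl] at r1 r2
    rw [X_pow_eq (x+y+d+1-j) (x-j) ((y-j)+((d+1-j)+(j+j))) (by omega),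
        X_pow_eq ((y-j)+((d+1-j)+(j+j))) (y-j) ((d+1-j)+(j+j)) rfl,
        X_pow_eq ((d+1-j)+(j+j)) (d+1-j) (j+j) rfl,
        X_pow_eq (j+j) j j rfl] at r3
    have key := core_id (q^(x-j)) (q^(y-j)) (q^(d+1-j)) (q^j) (q^1)
      (Bn (x+y+d+1-j) (x+y)) (Bn (x+y+d-j) (x+y)) (Bn x j) (Bn y j)
      (Bn x (j+1)) (Bn y (j+1)) (q^(j*j)) ht hQ hu hw
      (by linear_combination r1) (by linear_combination r2) (by linear_combination r3)
    linear_combination key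

/-- The balanced q-Pfaff–Saalschütz identity in Gaussian-binomial form. -/
lemma saal (x y N : ℕ) (hx : x < N) (d : ℕ) :
    ∑ j ∈ Finset.range N, Tt x y (x+y+d) j = Bn (y+d) y * Bn (x+d) x := by
  induction d with
  | zero =>
    rw [Finset.sum_eq_single 0]
    · simp only [Tt, Nat.add_zero, Nat.sub_zero, Nat.zero_mul, pow_zero]
      rw [Bn_zero, Bn_zero, Bn_self, Bn_self, Bn_self]
      ring
    · intro j _ hj
      rcases lt_or_ge x j with h | h
      · simp [Tt, Bn_eq_zero h]
      · have hx0 : 0 < x := by omega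
        simp [Tt, Bn_eq_zero (show (x+y-j) < (x+y) by omega)]
    · intro h
      exact absurd (Finset.mem_range.2 (by omega)) h
  | succ d ih =>
    have tele : (1 - q^(d+1))^2 * (∑ j ∈ Finset.range N, Tt x y (x+y+(d+1)) j)
        - (1 - q^(y+d+1)) * (1 - q^(x+d+1)) * (∑ j ∈ Finset.range N, Tt x y (x+y+d) j)
        = Gg x y d N - Gg x y d 0 := by
      rw [Finset.mul_sum, Finset.mul_sum, ← Finset.sum_sub_distrib,
          ← Finset.sum_range_sub (f := Gg x y d)]
      apply Finset.sum_congr rfl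
      intro j _
      have := cert x y d j
      rw [show x+y+d+1 = x+y+(d+1) by omega] at this
      exact this
    have gN : Gg x y d N = 0 := by
      simp [Gg, Bn_eq_zero hx]
    have g0 : Gg x y d 0 = 0 := by
      simp [Gg]
    rw [gN, g0, sub_zero, ih] at tele
    have hA : ((1:RatFunc ℚ) - q^(d+1))^2 ≠ 0 :=
      pow_ne_zero _ (one_sub_X_pow_ne_zero (by omega))
    apply mul_left_cancel₀ hA
    rw [show (1 - q^(d+1))^2 * (∑ j ∈ Finset.range N, Tt x y (x+y+(d+1)) j)
        = (1 - q^(y+d+1)) * (1 - q^(x+d+1)) * (Bn (y+d) y * Bn (x+d) x) by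
          linear_combination tele]
    have ry := Bn_succ_top (y+d) y
    rw [show y+d+1-y = d+1 by omega] at ry
    have rx := Bn_succ_top (x+d) x
    rw [show x+d+1-x = d+1 by omega] at rx
    rw [show y+(d+1) = y+d+1 by omega, show x+(d+1) = x+d+1 by omega]
    have hprod : (Bn (y+d+1) y * (1 - q^(d+1))) * (Bn (x+d+1) x * (1 - q^(d+1)))
        = (Bn (y+d) y * (1 - q^(y+d+1))) * (Bn (x+d) x * (1 - q^(x+d+1))) := by
      rw [ry, rx]
    linear_combination -hprod

theorem q_gould_square (n : ℕ) (hn : 0 < n) :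
    ∑ k ∈ Finset.range (n + 1),
      (RatFunc.X : RatFunc ℚ) ^ (((k : ℤ) - n) ^ 2) *
        qBinom RatFunc.X (n : ℤ) (k : ℤ) ^ 2 *
        qBinom RatFunc.X (3 * (n : ℤ) + k) (2 * (n : ℤ))
    = qBinom RatFunc.X (3 * (n : ℤ)) (n : ℤ) ^ 2 := by
  rw [← Finset.sum_range_reflect]
  have hterm : ∀ j ∈ Finset.range (n+1),
      (RatFunc.X : RatFunc ℚ) ^ ((((n + 1 - 1 - j : ℕ) : ℤ) - n) ^ 2) *
        qBinom RatFunc.X (n : ℤ) ((n + 1 - 1 - j : ℕ) : ℤ) ^ 2 *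
        qBinom RatFunc.X (3 * (n : ℤ) + ((n + 1 - 1 - j : ℕ) : ℤ)) (2 * (n : ℤ))
      = Tt n n (n+n+2*n) j := by
    intro j hj
    have hjn : j ≤ n := by
      have := Finset.mem_range.1 hj; omega
    rw [show n + 1 - 1 - j = n - j from by omega]
    have e1 : (RatFunc.X : RatFunc ℚ) ^ ((((n - j : ℕ) : ℤ) - n) ^ 2) = q ^ (j*j) := by
      rw [show (((n - j : ℕ) : ℤ) - n) ^ 2 = ((j*j : ℕ) : ℤ) from by
        have hc : ((n - j : ℕ) : ℤ) = (n : ℤ) - j := by omega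
        rw [hc]; push_cast; ring]
      rw [zpow_natCast]
    have e2 : qBinom RatFunc.X (n : ℤ) ((n - j : ℕ) : ℤ) = Bn n j :=
      (Bn_symm hjn).symm
    have e3 : qBinom RatFunc.X (3 * (n : ℤ) + ((n - j : ℕ) : ℤ)) (2 * (n : ℤ))
        = Bn (n+n+2*n - j) (n+n) := by
      rw [show 3 * (n : ℤ) + ((n - j : ℕ) : ℤ) = ((n+n+2*n - j : ℕ) : ℤ) from by omega,
          show 2 * (n : ℤ) = ((n+n : ℕ) : ℤ) from by push_cast; ring]
      rfl
    rw [e1, e2, e3, Tt]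
    ring
  rw [Finset.sum_congr rfl hterm, saal n n (n+1) (Nat.lt_succ_self n) (2*n)]
  have e4 : qBinom RatFunc.X (3 * (n : ℤ)) (n : ℤ) = Bn (n+2*n) n := by
    rw [show 3 * (n : ℤ) = ((n+2*n : ℕ) : ℤ) from by push_cast; ring]
    rfl
  rw [e4, pow_two]
end

section
/- For nonnegative integers m, n, M, N with M ≥ m: ∑_{r=0}^{min(M−m, N)} q^{(N-r)(M-r-m)} · C_q(M−m, r) · C_q(N+m, m+r) · C_q(m+n+r, M+N) = C_q(m+n, M) · C_q(n, N). -/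
open Finset

local notation "q" => (RatFunc.X : RatFunc ℚ)
noncomputable abbrev P (n : ℕ) : RatFunc ℚ := qPoch q q n

lemma hq0 : q ≠ 0 := RatFunc.X_ne_zero

lemma factor_ne (j : ℕ) : (1 : RatFunc ℚ) - q * q ^ j ≠ 0 := by
  rw [sub_ne_zero]
  intro h
  have h2 : (algebraMap (Polynomial ℚ) (RatFunc ℚ)) 1
      = (algebraMap (Polynomial ℚ) (RatFunc ℚ)) (Polynomial.X * Polynomial.X ^ j) := by
    simpa [map_mul, map_pow, RatFunc.algebraMap_X] using h
  have h3 := RatFunc.algebraMap_injective ℚ h2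
  have := congrArg Polynomial.natDegree h3
  simp [Polynomial.natDegree_X_pow, Polynomial.natDegree_mul] at this
  omega

lemma P_ne (n : ℕ) : P n ≠ 0 := by
  unfold P qPoch
  exact Finset.prod_ne_zero_iff.mpr fun j _ => factor_ne j

lemma P_succ (n : ℕ) : P (n+1) = P n * (1 - q ^ (n+1)) := by
  unfold P qPoch
  rw [Finset.prod_range_succ, pow_succ]
  ring

noncomputable def qb (a b : ℕ) : RatFunc ℚ := qBinom q a b

lemma qb_def {a b : ℕ} (h : b ≤ a) : qb a b = P a / (P b * P (a - b)) := by
  unfold qb qBinom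
  rw [if_pos ⟨Int.natCast_nonneg b, by exact_mod_cast h⟩]
  have h1 : ((a:ℤ)).toNat = a := by omega
  have h2 : ((b:ℤ)).toNat = b := by omega
  have h3 : ((a:ℤ) - (b:ℤ)).toNat = a - b := by omega
  rw [h1, h2, h3]

lemma qb_zero {a b : ℕ} (h : a < b) : qb a b = 0 := by
  unfold qb qBinom
  rw [if_neg]
  rintro ⟨-, h2⟩
  exact absurd (by exact_mod_cast h2) (not_le.mpr h)

lemma qb_n0 (a : ℕ) : qb a 0 = 1 := by
  rw [qb_def (Nat.zero_le a)]
  simp only [Nat.sub_zero]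
  rw [show P 0 = 1 from by simp [P, qPoch]]
  rw [one_mul, div_self (P_ne a)]

lemma qb_self (a : ℕ) : qb a a = 1 := by
  rw [qb_def le_rfl]
  simp only [Nat.sub_self]
  rw [show P 0 = 1 from by simp [P, qPoch]]
  rw [mul_one, div_self (P_ne a)]

lemma qb_pascal (a b : ℕ) : qb (a+1) (b+1) = qb a b + q ^ (b+1) * qb a (b+1) := by
  rcases lt_or_ge a b with h | h
  · rw [qb_zero (by omega), qb_zero h, qb_zero (by omega)]; ring
  rcases eq_or_lt_of_le h with rfl | h
  · rw [qb_self, qb_self, qb_zero (by omega)]; ring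
  · -- b < a
    rw [qb_def (by omega), qb_def (by omega), qb_def (by omega)]
    have e1 : a + 1 - (b + 1) = a - b := by omega
    have e2 : a - (b+1) = (a - b) - 1 := by omega
    rw [e1, e2]
    obtain ⟨c, hc⟩ : ∃ c, a - b = c + 1 := ⟨a - b - 1, by omega⟩
    rw [hc]
    simp only [Nat.add_sub_cancel]
    rw [P_succ a, P_succ b, P_succ c]
    have fb : (1 : RatFunc ℚ) - q ^ (b+1) ≠ 0 := by
      simpa [pow_succ'] using factor_ne b
    have fc : (1 : RatFunc ℚ) - q ^ (c+1) ≠ 0 := by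
      simpa [pow_succ'] using factor_ne c
    have key : (1 : RatFunc ℚ) - q ^ (a+1) = (1 - q ^ (b+1)) + q^(b+1) * (1 - q ^ (c+1)) := by
      have : q ^ (b+1) * q ^ (c+1) = q ^ (a+1) := by
        rw [← pow_add]; congr 1; omega
      rw [← this]; ring
    field_simp [P_ne a, P_ne b, P_ne c, fb, fc]
    linear_combination key

noncomputable def F (m n M N r : ℕ) : RatFunc ℚ :=
  q ^ (((N:ℤ) - r) * ((M:ℤ) - r - m)) * qb (M - m) r * qb (N + m) (m + r) *
    qb (m + n + r) (M + N)

noncomputable def S (m n M N : ℕ) : RatFunc ℚ := ∑ r ∈ range (M + N + 1), F m n M N r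

lemma F_zero {m n M N r : ℕ} (h : min (M - m) N < r) : F m n M N r = 0 := by
  unfold F
  rcases Nat.lt_or_ge (M - m) r with h1 | h1
  · rw [qb_zero h1]; ring
  · rw [qb_zero (show N + m < m + r by omega)]; ring

lemma sum_F {m n M N K : ℕ} (hK : min (M - m) N < K) :
    ∑ r ∈ range K, F m n M N r = ∑ r ∈ range (min (M - m) N + 1), F m n M N r := by
  refine (Finset.sum_subset (Finset.range_subset_range.mpr (by omega)) ?_).symm
  intro x _ hx
  simp only [Finset.mem_range] at hx
  exact F_zero (by omega)

lemma S_eq_sum {m n M N K : ℕ} (hK : min (M - m) N < K) (hm : m ≤ M) :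
    S m n M N = ∑ r ∈ range K, F m n M N r := by
  rw [sum_F hK, S, sum_F (show min (M-m) N < M + N + 1 by omega)]

lemma hq0' : q ≠ 0 := RatFunc.X_ne_zero

lemma stepA (m n M N r : ℕ) :
    F (m+1) (n+1) (M+1) (N+1) r
      = q ^ (M+N+2) * F (m+1) n (M+1) (N+1) r + q ^ (M+1) * F (m+1) n (M+1) N r
        + F m (n+1) M (N+1) r := by
  unfold F
  rw [show M+1-(m+1) = M-m from by omega,
      show m+1+(n+1)+r = m+n+r+2 from by omega,
      show M+1+(N+1) = M+N+2 from by omega,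
      show m+1+n+r = m+n+r+1 from by omega,
      show m+(n+1)+r = m+n+r+1 from by omega,
      show M+1+N = M+N+1 from by omega,
      show M+(N+1) = M+N+1 from by omega,
      show N+1+(m+1) = N+m+2 from by omega,
      show m+1+r = m+r+1 from by omega,
      show N+(m+1) = N+m+1 from by omega,
      show N+1+m = N+m+1 from by omega,
      show (((N+1:ℕ):ℤ) - (r:ℕ)) * (((M+1:ℕ):ℤ) - (r:ℕ) - ((m+1:ℕ):ℤ))
        = ((N:ℤ) - r + 1) * ((M:ℤ) - r - m) from by push_cast; ring,
      show (((N:ℕ):ℤ) - (r:ℕ)) * (((M+1:ℕ):ℤ) - (r:ℕ) - ((m+1:ℕ):ℤ))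
        = ((N:ℤ) - r) * ((M:ℤ) - r - m) from by push_cast; ring,
      show (((N+1:ℕ):ℤ) - (r:ℕ)) * (((M:ℕ):ℤ) - (r:ℕ) - ((m:ℕ):ℤ))
        = ((N:ℤ) - r + 1) * ((M:ℤ) - r - m) from by push_cast; ring]
  have hp1 : qb (m+n+r+2) (M+N+2)
      = qb (m+n+r+1) (M+N+1) + q^(M+N+2) * qb (m+n+r+1) (M+N+2) :=
    qb_pascal (m+n+r+1) (M+N+1)
  have hp2 : qb (N+m+2) (m+r+1)
      = qb (N+m+1) (m+r) + q^(m+r+1) * qb (N+m+1) (m+r+1) :=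
    qb_pascal (N+m+1) (m+r)
  have hz : q ^ (((N:ℤ) - r + 1) * ((M:ℤ) - r - m)) * q^(m+r+1)
      = q ^ (((N:ℤ) - r) * ((M:ℤ) - r - m)) * q^(M+1) := by
    rw [← zpow_natCast q (m+r+1), ← zpow_natCast q (M+1),
        ← zpow_add₀ hq0', ← zpow_add₀ hq0']
    congr 1
    push_cast
    ring
  linear_combination
    (q ^ (((N:ℤ) - r + 1) * ((M:ℤ) - r - m)) * qb (M-m) r * qb (N+m+2) (m+r+1)) * hp1
    + (q ^ (((N:ℤ) - r + 1) * ((M:ℤ) - r - m)) * qb (M-m) r * qb (m+n+r+1) (M+N+1)) * hp2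
    + (qb (M-m) r * qb (N+m+1) (m+r+1) * qb (m+n+r+1) (M+N+1)) * hz

lemma stepB (n M N s : ℕ) :
    F 0 (n+1) (M+1) (N+1) (s+1)
      = q ^ (M+N+2) * F 0 n (M+1) (N+1) (s+1) + q ^ (M+1) * F 0 n (M+1) N (s+1)
        + F 1 n (N+1) M s := by
  unfold F
  simp only [Nat.sub_zero, Nat.add_zero, Nat.zero_add]
  rw [show N+1-1 = N from by omega,
      show n+(s+1) = n+s+1 from by omega,
      show (n+1)+(s+1) = n+s+2 from by omega,
      show 1+n+s = n+s+1 from by omega,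
      show M+1+(N+1) = M+N+2 from by omega,
      show M+1+N = M+N+1 from by omega,
      show N+1+M = M+N+1 from by omega,
      show 1+s = s+1 from by omega,
      show (((N+1:ℕ):ℤ) - ((s+1:ℕ):ℤ)) * (((M+1:ℕ):ℤ) - ((s+1:ℕ):ℤ) - ((0:ℕ):ℤ))
        = ((N:ℤ) - s) * ((M:ℤ) - s) from by push_cast; ring,
      show (((N:ℕ):ℤ) - ((s+1:ℕ):ℤ)) * (((M+1:ℕ):ℤ) - ((s+1:ℕ):ℤ) - ((0:ℕ):ℤ))
        = ((N:ℤ) - s - 1) * ((M:ℤ) - s) from by push_cast; ring,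
      show (((M:ℕ):ℤ) - ((s:ℕ):ℤ)) * (((N+1:ℕ):ℤ) - ((s:ℕ):ℤ) - ((1:ℕ):ℤ))
        = ((N:ℤ) - s) * ((M:ℤ) - s) from by push_cast; ring]
  have hp1 : qb (n+s+2) (M+N+2)
      = qb (n+s+1) (M+N+1) + q^(M+N+2) * qb (n+s+1) (M+N+2) :=
    qb_pascal (n+s+1) (M+N+1)
  have hp2 : qb (N+1) (s+1) = qb N s + q^(s+1) * qb N (s+1) :=
    qb_pascal N s
  have hz : q ^ (((N:ℤ) - s) * ((M:ℤ) - s)) * q^(s+1)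
      = q ^ (((N:ℤ) - s - 1) * ((M:ℤ) - s)) * q^(M+1) := by
    rw [← zpow_natCast q (s+1), ← zpow_natCast q (M+1),
        ← zpow_add₀ hq0', ← zpow_add₀ hq0']
    congr 1
    push_cast
    ring
  linear_combination
    (q ^ (((N:ℤ) - s) * ((M:ℤ) - s)) * qb (M+1) (s+1) * qb (N+1) (s+1)) * hp1
    + (q ^ (((N:ℤ) - s) * ((M:ℤ) - s)) * qb (M+1) (s+1) * qb (n+s+1) (M+N+1)) * hp2
    + (qb (M+1) (s+1) * qb N (s+1) * qb (n+s+1) (M+N+1)) * hz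

lemma stepB0 (n M N : ℕ) :
    F 0 (n+1) (M+1) (N+1) 0
      = q ^ (M+N+2) * F 0 n (M+1) (N+1) 0 + q ^ (M+1) * F 0 n (M+1) N 0 := by
  unfold F
  simp only [Nat.sub_zero, Nat.add_zero, Nat.zero_add]
  rw [qb_n0, qb_n0, qb_n0,
      show M+1+(N+1) = M+N+2 from by omega,
      show M+1+N = M+N+1 from by omega,
      show (((N+1:ℕ):ℤ) - ((0:ℕ):ℤ)) * (((M+1:ℕ):ℤ) - ((0:ℕ):ℤ) - ((0:ℕ):ℤ))
        = ((N:ℤ) + 1) * ((M:ℤ) + 1) from by push_cast; ring,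
      show (((N:ℕ):ℤ) - ((0:ℕ):ℤ)) * (((M+1:ℕ):ℤ) - ((0:ℕ):ℤ) - ((0:ℕ):ℤ))
        = (N:ℤ) * ((M:ℤ) + 1) from by push_cast; ring]
  have hp1 : qb (n+1) (M+N+2)
      = qb n (M+N+1) + q^(M+N+2) * qb n (M+N+2) :=
    qb_pascal n (M+N+1)
  have hz : q ^ (((N:ℤ) + 1) * ((M:ℤ) + 1))
      = q ^ ((N:ℤ) * ((M:ℤ) + 1)) * q^(M+1) := by
    rw [← zpow_natCast q (M+1), ← zpow_add₀ hq0']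
    congr 1
    push_cast
    ring
  linear_combination
    (q ^ (((N:ℤ) + 1) * ((M:ℤ) + 1))) * hp1 + (qb n (M+N+1)) * hz

lemma S_N0 (m n M : ℕ) (h : m ≤ M) : S m n M 0 = qb (m+n) M := by
  unfold S
  rw [Finset.sum_eq_single_of_mem 0 (by simp)]
  · unfold F
    rw [show (((0:ℕ):ℤ) - ((0:ℕ):ℤ)) * (((M:ℕ):ℤ) - ((0:ℕ):ℤ) - ((m:ℕ):ℤ)) = 0
        from by push_cast; ring]
    simp only [Nat.add_zero, Nat.zero_add, zpow_zero]
    rw [qb_n0, qb_self]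
    ring
  · intro b _ hb
    unfold F
    rw [qb_zero (show 0 + m < m + b from by omega)]
    ring

lemma S_n0 (m M N : ℕ) (h : m ≤ M) : S m 0 M (N+1) = 0 := by
  unfold S
  refine Finset.sum_eq_zero fun r _ => ?_
  unfold F
  rcases Nat.lt_or_ge (M - m) r with h1 | h1
  · rw [qb_zero h1]; ring
  · rw [qb_zero (show m + 0 + r < M + (N+1) from by omega)]; ring

lemma S_M0 (n N : ℕ) : S 0 n 0 N = qb n N := by
  unfold S
  rw [Finset.sum_eq_single_of_mem 0 (by simp)]
  · unfold F
    rw [show (((N:ℕ):ℤ) - ((0:ℕ):ℤ)) * (((0:ℕ):ℤ) - ((0:ℕ):ℤ) - ((0:ℕ):ℤ)) = 0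
        from by push_cast; ring]
    simp only [Nat.add_zero, Nat.zero_add, Nat.sub_zero, zpow_zero]
    rw [qb_n0, qb_n0]
    ring
  · intro b _ hb
    unfold F
    rw [show (0:ℕ) - 0 = 0 from rfl, qb_zero (show 0 < b from by omega)]
    ring

lemma hpow (a b : ℕ) : q^(a+1) * q^(b+1) = q^(a+b+2) := by
  rw [← pow_add]; congr 1; omega

lemma main : ∀ n m M N : ℕ, m ≤ M → S m n M N = qb (m+n) M * qb n N := by
  intro n
  induction n with
  | zero =>
    intro m M N h
    rcases N with _ | N
    · rw [S_N0 m 0 M h, qb_n0]; ring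
    · rw [S_n0 m M N h, qb_zero (show 0 < N+1 from by omega)]; ring
  | succ n IHn =>
    intro m
    induction m with
    | zero =>
      intro M N h
      rcases N with _ | N
      · rw [S_N0 0 (n+1) M h, qb_n0]; ring
      rcases M with _ | M
      · rw [S_M0 (n+1) (N+1), qb_n0]; ring
      -- main m = 0 recurrence
      have hrec : S 0 (n+1) (M+1) (N+1)
          = q^(M+N+2) * S 0 n (M+1) (N+1) + q^(M+1) * S 0 n (M+1) N
            + S 1 n (N+1) M := by
        calc S 0 (n+1) (M+1) (N+1)
            = ∑ r ∈ range (M+N+3), F 0 (n+1) (M+1) (N+1) r :=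
              S_eq_sum (by omega) (by omega)
          _ = (∑ i ∈ range (M+N+2), F 0 (n+1) (M+1) (N+1) (i+1))
              + F 0 (n+1) (M+1) (N+1) 0 := Finset.sum_range_succ' _ _
          _ = (∑ i ∈ range (M+N+2),
                (q^(M+N+2) * F 0 n (M+1) (N+1) (i+1) + q^(M+1) * F 0 n (M+1) N (i+1)
                  + F 1 n (N+1) M i))
              + (q^(M+N+2) * F 0 n (M+1) (N+1) 0 + q^(M+1) * F 0 n (M+1) N 0) := by
              rw [stepB0]
              exact congrArg₂ _ (Finset.sum_congr rfl fun i _ => stepB n M N i) rfl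
          _ = q^(M+N+2) * ((∑ i ∈ range (M+N+2), F 0 n (M+1) (N+1) (i+1))
                + F 0 n (M+1) (N+1) 0)
              + q^(M+1) * ((∑ i ∈ range (M+N+2), F 0 n (M+1) N (i+1))
                + F 0 n (M+1) N 0)
              + ∑ i ∈ range (M+N+2), F 1 n (N+1) M i := by
              rw [Finset.sum_add_distrib, Finset.sum_add_distrib, ← Finset.mul_sum,
                ← Finset.mul_sum]
              ring
          _ = q^(M+N+2) * (∑ r ∈ range (M+N+3), F 0 n (M+1) (N+1) r)
              + q^(M+1) * (∑ r ∈ range (M+N+3), F 0 n (M+1) N r)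
              + ∑ i ∈ range (M+N+2), F 1 n (N+1) M i := by
              rw [← Finset.sum_range_succ', ← Finset.sum_range_succ']
          _ = q^(M+N+2) * S 0 n (M+1) (N+1) + q^(M+1) * S 0 n (M+1) N
              + S 1 n (N+1) M := by
              rw [← S_eq_sum (m := 0) (n := n) (M := M+1) (N := N+1) (K := M+N+3)
                    (by omega) (by omega),
                  ← S_eq_sum (m := 0) (n := n) (M := M+1) (N := N) (K := M+N+3)
                    (by omega) (by omega),
                  ← S_eq_sum (m := 1) (n := n) (M := N+1) (N := M) (K := M+N+2)
                    (by omega) (by omega)]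
      rw [hrec, IHn 0 (M+1) (N+1) (by omega), IHn 0 (M+1) N (by omega),
          IHn 1 (N+1) M (by omega)]
      have hp1 : qb (0+(n+1)) (M+1) = qb n M + q^(M+1) * qb n (M+1) := by
        rw [show 0+(n+1) = n+1 from by omega]; exact qb_pascal n M
      have hp2 : qb (n+1) (N+1) = qb n N + q^(N+1) * qb n (N+1) := qb_pascal n N
      rw [show (0:ℕ)+n = n from by omega, show (1:ℕ)+n = n+1 from by omega]
      linear_combination (-(qb (n+1) (N+1))) * hp1 - (q^(M+1) * qb n (M+1)) * hp2
        - (qb n (M+1) * qb n (N+1)) * hpow M N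
    | succ m IHm =>
      intro M N h
      rcases N with _ | N
      · rw [S_N0 (m+1) (n+1) M h, qb_n0]; ring
      rcases M with _ | M
      · omega
      have hm : m ≤ M := by omega
      have hrec : S (m+1) (n+1) (M+1) (N+1)
          = q^(M+N+2) * S (m+1) n (M+1) (N+1) + q^(M+1) * S (m+1) n (M+1) N
            + S m (n+1) M (N+1) := by
        calc S (m+1) (n+1) (M+1) (N+1)
            = ∑ r ∈ range (M+N+3), F (m+1) (n+1) (M+1) (N+1) r :=
              S_eq_sum (by omega) (by omega)
          _ = ∑ r ∈ range (M+N+3),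
                (q^(M+N+2) * F (m+1) n (M+1) (N+1) r + q^(M+1) * F (m+1) n (M+1) N r
                  + F m (n+1) M (N+1) r) :=
              Finset.sum_congr rfl fun r _ => stepA m n M N r
          _ = q^(M+N+2) * (∑ r ∈ range (M+N+3), F (m+1) n (M+1) (N+1) r)
              + q^(M+1) * (∑ r ∈ range (M+N+3), F (m+1) n (M+1) N r)
              + ∑ r ∈ range (M+N+3), F m (n+1) M (N+1) r := by
              rw [Finset.sum_add_distrib, Finset.sum_add_distrib, Finset.mul_sum,
                Finset.mul_sum]
          _ = q^(M+N+2) * S (m+1) n (M+1) (N+1) + q^(M+1) * S (m+1) n (M+1) N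
              + S m (n+1) M (N+1) := by
              rw [← S_eq_sum (m := m+1) (n := n) (M := M+1) (N := N+1) (K := M+N+3)
                    (by omega) (by omega),
                  ← S_eq_sum (m := m+1) (n := n) (M := M+1) (N := N) (K := M+N+3)
                    (by omega) (by omega),
                  ← S_eq_sum (m := m) (n := n+1) (M := M) (N := N+1) (K := M+N+3)
                    (by omega) (by omega)]
      rw [hrec, IHn (m+1) (M+1) (N+1) (by omega), IHn (m+1) (M+1) N (by omega),
          IHm M (N+1) hm]
      have hp1 : qb (m+1+(n+1)) (M+1) = qb (m+n+1) M + q^(M+1) * qb (m+n+1) (M+1) := by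
        rw [show m+1+(n+1) = (m+n+1)+1 from by omega]; exact qb_pascal (m+n+1) M
      have hp2 : qb (n+1) (N+1) = qb n N + q^(N+1) * qb n (N+1) := qb_pascal n N
      rw [show m+1+n = m+n+1 from by omega, show m+(n+1) = m+n+1 from by omega]
      linear_combination (-(qb (n+1) (N+1))) * hp1 - (q^(M+1) * qb (m+n+1) (M+1)) * hp2
        - (qb (m+n+1) (M+1) * qb n (N+1)) * hpow M N

theorem q_andrews (m n M N : ℕ) (hMm : m ≤ M) :
    ∑ r ∈ Finset.range (min (M - m) N + 1),
      (RatFunc.X : RatFunc ℚ) ^ (((N : ℤ) - r) * ((M : ℤ) - r - m)) *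
        qBinom RatFunc.X ((M : ℤ) - m) (r : ℤ) *
        qBinom RatFunc.X ((N : ℤ) + m) ((m : ℤ) + r) *
        qBinom RatFunc.X ((m : ℤ) + n + r) ((M : ℤ) + N)
    = qBinom RatFunc.X ((m : ℤ) + n) (M : ℤ) * qBinom RatFunc.X (n : ℤ) (N : ℤ) := by
  have key : ∀ r : ℕ,
      (RatFunc.X : RatFunc ℚ) ^ (((N : ℤ) - r) * ((M : ℤ) - r - m)) *
        qBinom RatFunc.X ((M : ℤ) - m) (r : ℤ) *
        qBinom RatFunc.X ((N : ℤ) + m) ((m : ℤ) + r) *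
        qBinom RatFunc.X ((m : ℤ) + n + r) ((M : ℤ) + N) = F m n M N r := by
    intro r
    unfold F qb
    push_cast [Nat.cast_sub hMm]
    ring_nf
  calc ∑ r ∈ Finset.range (min (M - m) N + 1),
      (RatFunc.X : RatFunc ℚ) ^ (((N : ℤ) - r) * ((M : ℤ) - r - m)) *
        qBinom RatFunc.X ((M : ℤ) - m) (r : ℤ) *
        qBinom RatFunc.X ((N : ℤ) + m) ((m : ℤ) + r) *
        qBinom RatFunc.X ((m : ℤ) + n + r) ((M : ℤ) + N)
      = ∑ r ∈ Finset.range (min (M - m) N + 1), F m n M N r :=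
        Finset.sum_congr rfl fun r _ => key r
    _ = S m n M N := (S_eq_sum (by omega) hMm).symm
    _ = qb (m + n) M * qb n N := main n m M N hMm
    _ = qBinom RatFunc.X ((m : ℤ) + n) (M : ℤ) * qBinom RatFunc.X (n : ℤ) (N : ℤ) := by
      unfold qb
      push_cast
      ring
end
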